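/- For every odd n ≥ 3, the Slater set of the regular tournament T_reg on n vertices is the entire vertex set {0, 1, …, n−1}. -/

import Mathlib

open scoped Classical

variable {V : Type*}

/-- A tournament: an irreflexive relation such that for distinct `u, v`
exactly one of `r u v` and `r v u` holds. -/
def IsTournament (r : V → V → Prop) : Prop :=
  (∀ v, ¬ r v v) ∧ ∀ u v : V, u ≠ v → (r u v ↔ ¬ r v u)

/-- The regular tournament on `Fin n` (for odd `n`): vertex `i` dominates
`i + k (mod n)` for every `k` with `1 ≤ k ≤ (n-1)/2` (i.e. `2 * k ≤ n - 1`). -/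
def regRel (n : ℕ) [NeZero n] : Fin n → Fin n → Prop :=
  fun i j => ∃ k : ℕ, 1 ≤ k ∧ 2 * k ≤ n - 1 ∧ j = i + (Fin.ofNat n k)

/-- The Slater score of a strict order `s` w.r.t. the dominance relation `r`. -/
noncomputable def slaterScore (r s : V → V → Prop) : ℕ :=
  {p : V × V | s p.1 p.2 ∧ r p.1 p.2}.ncard

/-- `s` is a Slater order for the tournament `r`: a strict total order of maximum Slater score. -/
def IsSlaterOrder (r s : V → V → Prop) : Prop :=
  IsStrictTotalOrder V s ∧
    ∀ s' : V → V → Prop, IsStrictTotalOrder V s' → slaterScore r s' ≤ slaterScore r s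

/-- The Slater set: maximum elements of Slater orders. -/
def slaterSet (r : V → V → Prop) : Set V :=
  {m | ∃ s : V → V → Prop, IsSlaterOrder r s ∧ ∀ x, x ≠ m → s m x}

lemma regRel_shift_aux (n : ℕ) [NeZero n] (d i j : Fin n) :
    regRel n (i + d) (j + d) ↔ regRel n i j := by
  constructor
  · rintro ⟨k, h1, h2, h3⟩
    exact ⟨k, h1, h2, add_right_cancel (b := d) (by rw [h3]; abel)⟩
  · rintro ⟨k, h1, h2, h3⟩
    exact ⟨k, h1, h2, by rw [h3]; abel⟩

lemma score_shift_aux (n : ℕ) [NeZero n] (s : Fin n → Fin n → Prop) (d : Fin n) :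
    slaterScore (regRel n) (fun x y => s (x + d) (y + d)) = slaterScore (regRel n) s := by
  unfold slaterScore
  have hinj : Function.Injective (fun p : Fin n × Fin n => (p.1 + d, p.2 + d)) := by
    rintro ⟨a, b⟩ ⟨c, e⟩ h
    simp only [Prod.mk.injEq] at h
    exact Prod.ext (add_right_cancel h.1) (add_right_cancel h.2)
  have himg : (fun p : Fin n × Fin n => (p.1 + d, p.2 + d)) ''
      {p : Fin n × Fin n | s (p.1 + d) (p.2 + d) ∧ regRel n p.1 p.2}
      = {p : Fin n × Fin n | s p.1 p.2 ∧ regRel n p.1 p.2} := by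
    ext ⟨x, y⟩
    constructor
    · rintro ⟨⟨a, b⟩, ⟨h1, h2⟩, h3⟩
      simp only [Prod.mk.injEq] at h3
      obtain ⟨rfl, rfl⟩ := h3
      exact ⟨h1, (regRel_shift_aux n d a b).2 h2⟩
    · rintro ⟨h1, h2⟩
      refine ⟨(x - d, y - d), ⟨?_, ?_⟩, ?_⟩
      · simpa using h1
      · have := (regRel_shift_aux n d (x - d) (y - d)).1
        simp only [sub_add_cancel] at this
        exact this h2
      · simp
  rw [← himg, Set.ncard_image_of_injective _ hinj]

lemma exists_slaterOrder_aux (n : ℕ) [NeZero n] :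
    ∃ s : Fin n → Fin n → Prop, IsSlaterOrder (regRel n) s := by
  set S : Set ℕ := {k | ∃ s : Fin n → Fin n → Prop,
      IsStrictTotalOrder (Fin n) s ∧ slaterScore (regRel n) s = k} with hS
  have hne : S.Nonempty :=
    ⟨slaterScore (regRel n) (· < ·), (· < ·), inferInstance, rfl⟩
  have hbdd : BddAbove S := by
    refine ⟨Set.ncard (Set.univ : Set (Fin n × Fin n)), ?_⟩
    rintro k ⟨s, hs, rfl⟩
    exact Set.ncard_le_ncard (Set.subset_univ _) Set.finite_univ
  obtain ⟨s, hs, hk⟩ := Nat.sSup_mem hne hbdd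
  exact ⟨s, hs, fun s' hs' => hk ▸ le_csSup hbdd ⟨s', hs', rfl⟩⟩

/-- for odd `n ≥ 3` the Slater set of the regular tournament on
`n` vertices is the whole vertex set. -/
theorem slaterSet_regular_tournament (n : ℕ) [NeZero n] (hodd : Odd n) (hn : 3 ≤ n) :
    slaterSet (regRel n) = Set.univ := by
  obtain ⟨s, hs⟩ := exists_slaterOrder_aux n
  haveI := hs.1
  have wf : WellFounded s := Finite.wellFounded_of_trans_of_irrefl s
  set m0 := wf.min Set.univ ⟨0, trivial⟩ with hm0def
  have hm0 : ∀ x, x ≠ m0 → s m0 x := by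
    intro x hx
    rcases trichotomous_of s x m0 with h | h | h
    · exact absurd h (wf.not_lt_min Set.univ trivial)
    · exact absurd h hx
    · exact h
  ext m
  simp only [Set.mem_univ, iff_true]
  set d : Fin n := m0 - m with hd
  refine ⟨fun x y => s (x + d) (y + d), ⟨?_, ?_⟩, ?_⟩
  · refine { trichotomous := ?_, irrefl := ?_, trans := ?_ }
    · intro x y h1 h2
      rcases trichotomous_of s (x + d) (y + d) with h | h | h
      · exact absurd h h1
      · exact add_right_cancel h
      · exact absurd h h2
    · intro x h
      exact irrefl_of s (x + d) h
    · intro x y z hxy hyz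
      exact trans_of s hxy hyz
  · intro s' hs'
    rw [score_shift_aux]
    exact hs.2 s' hs'
  · intro x hx
    have hmd : m + d = m0 := by rw [hd]; abel
    rw [hmd]
    apply hm0
    intro hcon
    apply hx
    have : x + d = m + d := by rw [hcon, hmd]
    exact add_right_cancel this
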